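/- Let α > 0 and q ≥ 2, and let K ⊂ ℝⁿ be a centrally symmetric compact convex set with nonempty interior that is smooth and (α,q)-uniformly convex with respect to ‖·‖_K. For d₁, d₂ ∈ ∂K°, let x₁, x₂ ∈ ∂K be the (unique) maximizers x_i ∈ argmax_{x ∈ K} ⟨d_i, x⟩, i.e., x_i = ∇‖·‖_{K°}(d_i). Then ⟨d₁ − d₂, x₁ − x₂⟩ ≥ (2α/q)‖x₁ − x₂‖_K^q, and consequently ‖∇‖·‖_{K°}(d₁) − ∇‖·‖_{K°}(d₂)‖_K ≤ (q/(2α))^{1/(q−1)} · ‖d₁ − d₂‖_{K°}^{1/(q−1)}. -/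

import Mathlib

open scoped InnerProductSpace
open scoped Pointwise
open MeasureTheory

noncomputable section

abbrev Euc (n : ℕ) := EuclideanSpace ℝ (Fin n)

/-- The polar set `K° = {d | ⟪d, x⟫ ≤ 1 for all x ∈ K}`. -/
def polarSet {n : ℕ} (K : Set (Euc n)) : Set (Euc n) := {d | ∀ x ∈ K, ⟪d, x⟫_ℝ ≤ 1}

/-- The normal cone of `K` at `y`. -/
def normalCone {n : ℕ} (K : Set (Euc n)) (y : Euc n) : Set (Euc n) :=
  {d | ∀ x ∈ K, 0 ≤ ⟪d, y - x⟫_ℝ}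

/-- A set is smooth if at each boundary point there is exactly one normal direction in `∂K°`. -/
def SmoothSet {n : ℕ} (K : Set (Euc n)) : Prop :=
  ∀ x ∈ frontier K, ∃! d, d ∈ normalCone K x ∩ frontier (polarSet K)

/-- A set is strictly convex if the midpoint of two distinct boundary points is interior. -/
def StrictlyConvexSet {n : ℕ} (K : Set (Euc n)) : Prop :=
  ∀ x₁ ∈ frontier K, ∀ x₂ ∈ frontier K, x₁ ≠ x₂ → midpoint ℝ x₁ x₂ ∈ interior K

/-- `(α, q)`-uniform convexity of a set w.r.t. its gauge. -/
def UniformlyConvexSet {n : ℕ} (K : Set (Euc n)) (α q : ℝ) : Prop :=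
  ∀ x ∈ K, ∀ y ∈ K, ∀ z ∈ K, ∀ γ ∈ Set.Icc (0:ℝ) 1,
    γ • x + (1 - γ) • y + (α / q * (γ * (1 - γ)) * gauge K (x - y) ^ q) • z ∈ K

/-- The barrier function `F_K(x) = -ln(1 - ‖x‖_K) - ‖x‖_K`. -/
def FK {n : ℕ} (K : Set (Euc n)) (x : Euc n) : ℝ := -Real.log (1 - gauge K x) - gauge K x

/-- Fenchel conjugate of the barrier `F_K` (defined on `D_K = {‖x‖_K < 1}`). -/
def FstarK {n : ℕ} (K : Set (Euc n)) (d : Euc n) : ℝ :=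
  sSup ((fun x => ⟪x, d⟫_ℝ - FK K x) '' {x | gauge K x < 1})

/-- Bregman divergence `D_F(u, v) = F(u) - F(v) - ⟪∇F(v), u - v⟫`. -/
def breg {n : ℕ} (F : Euc n → ℝ) (u v : Euc n) : ℝ :=
  F u - F v - ⟪gradient F v, u - v⟫_ℝ

def l1Ball {n : ℕ} (r : ℝ) : Set (Euc n) := {x | ∑ i, |x i| ≤ r}
def linfBall {n : ℕ} (R : ℝ) : Set (Euc n) := {x | ∀ i, |x i| ≤ R}
def l2Ball {n : ℕ} (r : ℝ) : Set (Euc n) := Metric.closedBall 0 r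
def lqBall {n : ℕ} (q r : ℝ) : Set (Euc n) := {x | ∑ i, |x i| ^ q ≤ r ^ q}

section Helpers

variable {n : ℕ}

lemma polarSet_isClosed (K : Set (Euc n)) : IsClosed (polarSet K) := by
  have : polarSet K = ⋂ x ∈ K, {d : Euc n | ⟪d, x⟫_ℝ ≤ 1} := by
    ext d; simp [polarSet, Set.mem_iInter]
  rw [this]
  exact isClosed_biInter fun x _ =>
    isClosed_le (Continuous.inner continuous_id continuous_const) continuous_const

lemma zero_mem_interior_of_symm {K : Set (Euc n)} (hKconv : Convex ℝ K)
    (hKsymm : ∀ x ∈ K, -x ∈ K) (hKint : (interior K).Nonempty) :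
    (0 : Euc n) ∈ interior K := by
  obtain ⟨y, hy⟩ := hKint
  have hyK : y ∈ K := interior_subset hy
  have hny : -y ∈ K := hKsymm y hyK
  have := hKconv.combo_interior_self_mem_interior hy hny
      (by norm_num : (0:ℝ) < 1/2) (by norm_num : (0:ℝ) ≤ 1/2) (by norm_num)
  simpa [smul_neg] using this

lemma inner_le_gauge_of_mem_polar {K : Set (Euc n)} (hKconv : Convex ℝ K)
    (h0 : (0 : Euc n) ∈ interior K) {v : Euc n} (hv : v ∈ polarSet K) (x : Euc n) :
    ⟪v, x⟫_ℝ ≤ gauge K x := by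
  have habs : Absorbent ℝ K :=
    absorbent_nhds_zero (mem_nhds_iff.mpr ⟨interior K, interior_subset, isOpen_interior, h0⟩)
  have h0K : (0 : Euc n) ∈ K := interior_subset h0
  refine le_of_forall_pos_le_add fun ε hε => ?_
  set s := gauge K x with hs
  have hsnn : 0 ≤ s := gauge_nonneg x
  have hpos : 0 < s + ε := by linarith
  have hy : gauge K ((s + ε)⁻¹ • x) < 1 := by
    rw [gauge_smul_of_nonneg (inv_nonneg.mpr hpos.le), smul_eq_mul]
    rw [inv_mul_lt_iff₀ hpos, mul_one]
    linarith
  have hyK : (s + ε)⁻¹ • x ∈ K := gauge_lt_one_subset_self hKconv h0K habs hy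
  have := hv _ hyK
  rw [real_inner_smul_right] at this
  calc ⟪v, x⟫_ℝ = (s + ε) * ((s + ε)⁻¹ * ⟪v, x⟫_ℝ) := by
        field_simp
    _ ≤ (s + ε) * 1 := by
        exact mul_le_mul_of_nonneg_left this hpos.le
    _ = s + ε := mul_one _

lemma polarSet_mem_nhds_zero {K : Set (Euc n)} (hKcomp : IsCompact K) :
    polarSet K ∈ nhds (0 : Euc n) := by
  obtain ⟨R₀, hR₀⟩ := hKcomp.isBounded.exists_norm_le
  set R := max R₀ 0 with hRdef
  have hR : ∀ x ∈ K, ‖x‖ ≤ R := fun x hx => (hR₀ x hx).trans (le_max_left _ _)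
  have hRnn : (0:ℝ) ≤ R := le_max_right _ _
  have hball : Metric.ball (0 : Euc n) (R + 1)⁻¹ ⊆ polarSet K := by
    intro d hd x hx
    have hdn : ‖d‖ < (R + 1)⁻¹ := by simpa using hd
    calc ⟪d, x⟫_ℝ ≤ ‖d‖ * ‖x‖ := real_inner_le_norm d x
      _ ≤ (R + 1)⁻¹ * R := by
          apply mul_le_mul hdn.le (hR _ hx) (norm_nonneg _) (inv_nonneg.mpr (by linarith))

      _ ≤ 1 := by rw [inv_mul_le_iff₀ (by linarith)]; linarith
  exact Filter.mem_of_superset (Metric.ball_mem_nhds 0 (by positivity)) hball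

lemma inner_le_gauge_mul_gauge_polar {K : Set (Euc n)} (hKcomp : IsCompact K)
    (hKconv : Convex ℝ K) (h0 : (0 : Euc n) ∈ interior K) (u x : Euc n) :
    ⟪u, x⟫_ℝ ≤ gauge (polarSet K) u * gauge K x := by
  have hconv : Convex ℝ (polarSet K) := by
    intro a ha b hb s t hs ht hst
    intro y hy
    have ha' := ha y hy
    have hb' := hb y hy
    rw [inner_add_left, real_inner_smul_left, real_inner_smul_left]
    nlinarith
  have h0p : (0 : Euc n) ∈ polarSet K := fun y _ => by simp
  have habs : Absorbent ℝ (polarSet K) :=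
    absorbent_nhds_zero (polarSet_mem_nhds_zero hKcomp)
  have hgx : 0 ≤ gauge K x := gauge_nonneg x
  refine le_of_forall_pos_le_add fun ε hε => ?_
  set a := gauge (polarSet K) u with ha
  have hann : 0 ≤ a := gauge_nonneg u
  have hgpos : 0 < gauge K x + 1 := by linarith
  set δ := ε / (gauge K x + 1) with hδ
  have hδpos : 0 < δ := by positivity
  have hpos : 0 < a + δ := by linarith
  have hu : gauge (polarSet K) ((a + δ)⁻¹ • u) < 1 := by
    rw [gauge_smul_of_nonneg (inv_nonneg.mpr hpos.le), smul_eq_mul]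
    rw [inv_mul_lt_iff₀ hpos, mul_one]
    linarith
  have huP : (a + δ)⁻¹ • u ∈ polarSet K := gauge_lt_one_subset_self hconv h0p habs hu
  have h1 : ⟪(a + δ)⁻¹ • u, x⟫_ℝ ≤ gauge K x :=
    inner_le_gauge_of_mem_polar hKconv h0 huP x
  rw [real_inner_smul_left] at h1
  have h2 : ⟪u, x⟫_ℝ ≤ (a + δ) * gauge K x := by
    have := mul_le_mul_of_nonneg_left h1 hpos.le
    calc ⟪u, x⟫_ℝ = (a + δ) * ((a + δ)⁻¹ * ⟪u, x⟫_ℝ) := by field_simp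
      _ ≤ (a + δ) * gauge K x := this
  calc ⟪u, x⟫_ℝ ≤ (a + δ) * gauge K x := h2
    _ = a * gauge K x + δ * gauge K x := by ring
    _ ≤ a * gauge K x + ε := by
        have : δ * gauge K x ≤ ε := by
          rw [hδ, div_mul_eq_mul_div, div_le_iff₀ hgpos]
          nlinarith
        linarith

lemma inner_eq_one_of_max {K : Set (Euc n)} (hKcomp : IsCompact K)
    {d x : Euc n} (hd : d ∈ frontier (polarSet K)) (hxK : x ∈ K)
    (hmax : IsMaxOn (fun y => ⟪d, y⟫_ℝ) K x) : ⟪d, x⟫_ℝ = 1 := by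
  have hdP : d ∈ polarSet K := by
    have := frontier_subset_closure hd
    rwa [(polarSet_isClosed K).closure_eq] at this
  have hle : ⟪d, x⟫_ℝ ≤ 1 := hdP x hxK
  rcases eq_or_lt_of_le hle with h | h
  · exact h
  exfalso
  obtain ⟨R, hR⟩ := hKcomp.isBounded.exists_norm_le
  have hRnn : 0 ≤ R := (norm_nonneg _).trans (hR _ hxK)
  set s := ⟪d, x⟫_ℝ with hs
  set ε := (1 - s) / (R + 1) with hε
  have hεpos : 0 < ε := by
    apply div_pos (by linarith) (by linarith)
  have hball : Metric.ball d ε ⊆ polarSet K := by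
    intro d' hd' y hy
    have hdn : ‖d' - d‖ < ε := by
      rw [Metric.mem_ball, dist_eq_norm] at hd'; exact hd'
    have h1 : ⟪d, y⟫_ℝ ≤ s := hmax hy
    have h2 : ⟪d' - d, y⟫_ℝ ≤ ε * R := by
      calc ⟪d' - d, y⟫_ℝ ≤ ‖d' - d‖ * ‖y‖ := real_inner_le_norm _ _
        _ ≤ ε * R := mul_le_mul hdn.le (hR _ hy) (norm_nonneg _) hεpos.le
    have h3 : ε * R < 1 - s := by
      rw [hε, div_mul_eq_mul_div, div_lt_iff₀ (by linarith : (0:ℝ) < R + 1)]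
      nlinarith
    have : ⟪d', y⟫_ℝ = ⟪d, y⟫_ℝ + ⟪d' - d, y⟫_ℝ := by
      rw [← inner_add_left]; congr 1; abel
    linarith [this ▸ (by linarith : ⟪d, y⟫_ℝ + ⟪d' - d, y⟫_ℝ ≤ 1)]
  have : d ∈ interior (polarSet K) :=
    mem_interior_iff_mem_nhds.mpr (Filter.mem_of_superset (Metric.ball_mem_nhds d hεpos) hball)
  exact hd.2 this

lemma le_of_forall_gamma_mul_le {t C : ℝ} (ht : 0 ≤ t)
    (h : ∀ γ : ℝ, 0 < γ → γ < 1 → γ * t ≤ C) : t ≤ C := by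
  have hC : 0 ≤ C := le_trans (by positivity) (h (1/2) (by norm_num) (by norm_num))
  rcases eq_or_lt_of_le ht with h0 | h0
  · rw [← h0]; exact hC
  by_contra hlt
  push_neg at hlt
  have hγ1 : C / t < 1 := (div_lt_one h0).mpr hlt
  have hγ0 : 0 ≤ C / t := div_nonneg hC h0.le
  set γ := (C / t + 1) / 2 with hγdef
  have h1 : 0 < γ := by positivity
  have h2 : γ < 1 := by rw [hγdef]; linarith
  have h3 : C / t < γ := by rw [hγdef]; linarith
  have h4 : C < γ * t := by
    rw [div_lt_iff₀ h0] at h3; linarith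
  linarith [h γ h1 h2]

end Helpers

/-- For `d₁, d₂ ∈ ∂K°` with (unique) maximizers `x₁, x₂ ∈ ∂K` of
`⟪dᵢ, ·⟫` over `K` (i.e. `xᵢ = ∇‖·‖_{K°}(dᵢ)`), one has
`⟪d₁ - d₂, x₁ - x₂⟫ ≥ (2α/q)‖x₁ - x₂‖_K^q` and hence a Hölder bound on `x₁ - x₂`. -/
theorem gauge_polar_gradient_holder_on_sphere {n : ℕ}
    (K : Set (Euc n)) (hKcomp : IsCompact K) (hKconv : Convex ℝ K)
    (hKsymm : ∀ x ∈ K, -x ∈ K) (hKint : (interior K).Nonempty)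
    (hsmooth : SmoothSet K)
    (α q : ℝ) (hα : 0 < α) (hq : 2 ≤ q)
    (huc : UniformlyConvexSet K α q)
    (d₁ d₂ : Euc n)
    (hd₁ : d₁ ∈ frontier (polarSet K)) (hd₂ : d₂ ∈ frontier (polarSet K))
    (x₁ x₂ : Euc n)
    (hx₁ : x₁ ∈ frontier K) (hx₂ : x₂ ∈ frontier K)
    (hmax₁ : IsMaxOn (fun x => ⟪d₁, x⟫_ℝ) K x₁)
    (hmax₂ : IsMaxOn (fun x => ⟪d₂, x⟫_ℝ) K x₂)
    (hgrad₁ : gradient (gauge (polarSet K)) d₁ = x₁)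
    (hgrad₂ : gradient (gauge (polarSet K)) d₂ = x₂) :
    ⟪d₁ - d₂, x₁ - x₂⟫_ℝ ≥ 2 * α / q * gauge K (x₁ - x₂) ^ q ∧
    gauge K (x₁ - x₂)
      ≤ (q / (2 * α)) ^ (1 / (q - 1)) * gauge (polarSet K) (d₁ - d₂) ^ (1 / (q - 1)) := by
  have hqpos : (0:ℝ) < q := by linarith
  have hKclosed : IsClosed K := hKcomp.isClosed
  have hx₁K : x₁ ∈ K := by
    have := frontier_subset_closure hx₁; rwa [hKclosed.closure_eq] at this
  have hx₂K : x₂ ∈ K := by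
    have := frontier_subset_closure hx₂; rwa [hKclosed.closure_eq] at this
  have h0 : (0 : Euc n) ∈ interior K := zero_mem_interior_of_symm hKconv hKsymm hKint
  have hinner₁ : ⟪d₁, x₁⟫_ℝ = 1 := inner_eq_one_of_max hKcomp hd₁ hx₁K hmax₁
  have hinner₂ : ⟪d₂, x₂⟫_ℝ = 1 := inner_eq_one_of_max hKcomp hd₂ hx₂K hmax₂
  set g := gauge K (x₁ - x₂) with hg
  have hgnn : 0 ≤ g := gauge_nonneg _
  have hgsymm : gauge K (x₂ - x₁) = g := by
    rw [(neg_sub x₁ x₂).symm, gauge_neg hKsymm]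
  -- key one-sided estimate
  have key : ∀ (d y z : Euc n), ⟪d, y⟫_ℝ = 1 → y ∈ K → z ∈ K →
      IsMaxOn (fun x => ⟪d, x⟫_ℝ) K y →
      ∀ γ : ℝ, 0 < γ → γ < 1 → γ * (α / q * gauge K (y - z) ^ q) ≤ ⟪d, y - z⟫_ℝ := by
    intro d y z hdy hyK hzK hmax γ hγ0 hγ1
    have hmem := huc y hyK z hzK y hyK γ ⟨hγ0.le, hγ1.le⟩
    have hle : ⟪d, γ • y + (1 - γ) • z + (α / q * (γ * (1 - γ)) * gauge K (y - z) ^ q) • y⟫_ℝ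
        ≤ 1 := by
      have := hmax hmem
      simpa [hdy] using this
    rw [inner_add_right, inner_add_right, real_inner_smul_right, real_inner_smul_right,
      real_inner_smul_right, hdy] at hle
    have hexp : (0:ℝ) ≤ gauge K (y - z) ^ q := Real.rpow_nonneg (gauge_nonneg _) q
    have h1γ : 0 < 1 - γ := by linarith
    have hsub : ⟪d, y - z⟫_ℝ = 1 - ⟪d, z⟫_ℝ := by
      rw [inner_sub_right, hdy]
    rw [hsub]
    have hfac : (1 - γ) * (γ * (α / q * gauge K (y - z) ^ q)) ≤ (1 - γ) * (1 - ⟪d, z⟫_ℝ) := by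
      nlinarith
    exact le_of_mul_le_mul_left hfac h1γ
  have hsum : ∀ γ : ℝ, 0 < γ → γ < 1 →
      γ * (2 * α / q * g ^ q) ≤ ⟪d₁ - d₂, x₁ - x₂⟫_ℝ := by
    intro γ hγ0 hγ1
    have h1 := key d₁ x₁ x₂ hinner₁ hx₁K hx₂K hmax₁ γ hγ0 hγ1
    have h2 := key d₂ x₂ x₁ hinner₂ hx₂K hx₁K hmax₂ γ hγ0 hγ1
    rw [hgsymm] at h2
    have hsplit : ⟪d₁ - d₂, x₁ - x₂⟫_ℝ = ⟪d₁, x₁ - x₂⟫_ℝ + ⟪d₂, x₂ - x₁⟫_ℝ := by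
      rw [inner_sub_left]
      rw [(neg_sub x₁ x₂).symm, inner_neg_right]
      ring
    rw [hsplit]
    calc γ * (2 * α / q * g ^ q)
        = γ * (α / q * g ^ q) + γ * (α / q * g ^ q) := by ring
      _ ≤ ⟪d₁, x₁ - x₂⟫_ℝ + ⟪d₂, x₂ - x₁⟫_ℝ := add_le_add h1 h2
  have hgq_nn : (0:ℝ) ≤ g ^ q := Real.rpow_nonneg hgnn q
  have hpart1 : ⟪d₁ - d₂, x₁ - x₂⟫_ℝ ≥ 2 * α / q * g ^ q := by
    apply le_of_forall_gamma_mul_le (by positivity) hsum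
  refine ⟨hpart1, ?_⟩
  -- second part
  set A := gauge (polarSet K) (d₁ - d₂) with hA
  have hAnn : 0 ≤ A := gauge_nonneg _
  have hCS : ⟪d₁ - d₂, x₁ - x₂⟫_ℝ ≤ A * g :=
    inner_le_gauge_mul_gauge_polar hKcomp hKconv h0 (d₁ - d₂) (x₁ - x₂)
  have hmain : 2 * α / q * g ^ q ≤ A * g := le_trans hpart1 hCS
  have hq1 : 0 < q - 1 := by linarith
  rcases eq_or_lt_of_le hgnn with hg0 | hgpos
  · rw [← hg0]
    positivity
  -- g > 0
  have hgq : g ^ q = g ^ (q - 1) * g := by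
    nth_rewrite 1 [show q = (q - 1) + 1 by ring]
    rw [Real.rpow_add_one hgpos.ne']
  have hstep : g ^ (q - 1) ≤ q / (2 * α) * A := by
    have h2α : (0:ℝ) < 2 * α := by linarith
    have hmul : 2 * α / q * (g ^ (q - 1) * g) ≤ A * g := by rw [← hgq]; exact hmain
    have h1 : 2 * α / q * g ^ (q - 1) ≤ A := by
      have := (mul_le_mul_iff_of_pos_right hgpos).mp (by linarith [hmul] : (2 * α / q * g ^ (q - 1)) * g ≤ A * g)
      exact this
    rw [div_mul_eq_mul_div, div_le_iff₀ hqpos] at h1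
    rw [div_mul_eq_mul_div, le_div_iff₀ h2α]
    linarith
  have hgle : g = (g ^ (q - 1)) ^ (1 / (q - 1)) := by
    rw [← Real.rpow_mul hgnn, mul_one_div, div_self hq1.ne', Real.rpow_one]
  rw [hgle]
  have hrp : (g ^ (q - 1)) ^ (1 / (q - 1)) ≤ (q / (2 * α) * A) ^ (1 / (q - 1)) :=
    Real.rpow_le_rpow (Real.rpow_nonneg hgnn _) hstep (by positivity)
  refine le_trans hrp ?_
  rw [Real.mul_rpow (by positivity) hAnn]
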